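/- For functions f and g of Heaviside type (i.e., f(t) = F(t)H(t) with F smooth and H the Heaviside step function), the time derivative of the Riemann convolution satisfies f * (∂_t g) = f(0⁺) g + (f' H) * g, where f' denotes the classical derivative of F for t > 0. -/

import Mathlib

/-- Boltzmann's operation: for Heaviside-type functions `f = F·H` and `g = G·H`
with `F, G` continuously differentiable, the time derivative of the Riemann
convolution satisfies `f * (∂ₜ g) = f(0⁺) g + (f' H) * g` for `t ≥ 0`.
(The distributional derivative `∂ₜ g` equals `G' H + G(0) δ`, so
`(f * ∂ₜ g)(t) = ∫₀ᵗ F(τ) G'(t−τ) dτ + F(t) G(0)`.) -/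
theorem stmt_0 (F G : ℝ → ℝ) (hF : ContDiff ℝ 1 F) (hG : ContDiff ℝ 1 G)
    (t : ℝ) (ht : 0 ≤ t) :
    (∫ τ in (0:ℝ)..t, F τ * deriv G (t - τ)) + F t * G 0 =
      F 0 * G t + ∫ τ in (0:ℝ)..t, deriv F τ * G (t - τ) := by
  have hFd : Differentiable ℝ F := hF.differentiable one_ne_zero
  have hGd : Differentiable ℝ G := hG.differentiable one_ne_zero
  have hF' : Continuous (deriv F) := hF.continuous_deriv le_rfl
  have hG' : Continuous (deriv G) := hG.continuous_deriv le_rfl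
  have key : ∀ τ ∈ Set.uIcc (0:ℝ) t,
      HasDerivAt (fun τ => F τ * G (t - τ))
        (deriv F τ * G (t - τ) - F τ * deriv G (t - τ)) τ := by
    intro τ _
    have h1 : HasDerivAt F (deriv F τ) τ := (hFd τ).hasDerivAt
    have h2 : HasDerivAt (fun τ => G (t - τ)) (-deriv G (t - τ)) τ := by
      have := ((hGd (t - τ)).hasDerivAt).comp τ
        (((hasDerivAt_id τ).const_sub t))
      simpa [mul_comm, Function.comp_def] using this
    have := h1.mul h2
    exact this.congr_deriv (by ring)
  have hcF : Continuous F := hF.continuous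
  have hcG : Continuous G := hG.continuous
  have c1 : Continuous fun τ => deriv F τ * G (t - τ) :=
    hF'.mul (hcG.comp (continuous_const.sub continuous_id))
  have c2 : Continuous fun τ => F τ * deriv G (t - τ) :=
    hcF.mul (hG'.comp (continuous_const.sub continuous_id))
  have hint : IntervalIntegrable
      (fun τ => deriv F τ * G (t - τ) - F τ * deriv G (t - τ))
      MeasureTheory.volume 0 t := (c1.sub c2).intervalIntegrable _ _
  have := intervalIntegral.integral_eq_sub_of_hasDerivAt key hint
  rw [intervalIntegral.integral_sub (c1.intervalIntegrable _ _)
    (c2.intervalIntegrable _ _)] at this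
  simp only [sub_self, sub_zero] at this
  linarith [this]
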